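/- Let N ≥ 2 and let {|u^m_i⟩}, m = 1,…,N, be N orthonormal bases of ℂ^d. Then the quantity b = max_{i_N} { ∑_{i_2,…,i_{N−1}} max_{i_1}[c(u^1_{i_1}, u^2_{i_2})] · ∏_{m=2}^{N−1} c(u^m_{i_m}, u^{m+1}_{i_{m+1}}) } satisfies b ≤ max_{i_1,i_2} c(u^1_{i_1}, u^2_{i_2}); consequently −log₂(b) ≥ −log₂( max_{i_1,i_2} c(u^1_{i_1}, u^2_{i_2}) ), i.e. the multi-measurement bound is never weaker than the two-measurement Maassen–Uffink bound for M_1 and M_2. -/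

import Mathlib

open scoped BigOperators ComplexOrder

noncomputable section

/-- Standard inner product `⟨a|b⟩` on `ℂ^d` (conjugate-linear in the first argument). -/
def inn {d : ℕ} (a b : Fin d → ℂ) : ℂ := ∑ k, (starRingEnd ℂ) (a k) * b k

/-- The overlap `c(a,b) = |⟨a|b⟩|²`. -/
def ov {d : ℕ} (a b : Fin d → ℂ) : ℝ := ‖inn a b‖ ^ 2

/-- `u` lists the vectors of an orthonormal basis of `ℂ^d`. -/
def IsONB {d : ℕ} (u : Fin d → Fin d → ℂ) : Prop :=
  ∀ i j, inn (u i) (u j) = if i = j then 1 else 0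

/-- Shannon entropy (base 2) of a probability vector; note `Real.logb 2 0 = 0`. -/
def shannon {d : ℕ} (p : Fin d → ℝ) : ℝ := -∑ i, p i * Real.logb 2 (p i)

/-- Outcome probabilities `p_i = ⟨u_i|ρ|u_i⟩` of a projective measurement on the state `ρ`. -/
def probM {d : ℕ} (ρ : Matrix (Fin d) (Fin d) ℂ) (v : Fin d → Fin d → ℂ) (i : Fin d) : ℝ :=
  (dotProduct (star (v i)) (ρ.mulVec (v i))).re

open Classical in
/-- Von Neumann entropy (base 2): `S(ρ) = -∑ λ_k log₂ λ_k` over the eigenvalues of `ρ`. -/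
def vNEnt {ι : Type} [Fintype ι] [DecidableEq ι] (A : Matrix ι ι ℂ) : ℝ :=
  if h : A.IsHermitian then -∑ k, h.eigenvalues k * Real.logb 2 (h.eigenvalues k) else 0

open Classical in
/-- Matrix base-2 logarithm on the support, via the spectral decomposition
(eigenvalue `0` is sent to `0` since `Real.logb 2 0 = 0`). -/
def mlog2 {ι : Type} [Fintype ι] [DecidableEq ι] (A : Matrix ι ι ℂ) : Matrix ι ι ℂ :=
  if h : A.IsHermitian then
    (h.eigenvectorUnitary : Matrix ι ι ℂ) *
      Matrix.diagonal (fun k => (Real.logb 2 (h.eigenvalues k) : ℂ)) *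
      star (h.eigenvectorUnitary : Matrix ι ι ℂ)
  else 0

/-- Quantum relative entropy `S(ρ‖σ) = Tr(ρ log₂ ρ) - Tr(ρ log₂ σ)`. -/
def relEnt {ι : Type} [Fintype ι] [DecidableEq ι] (ρ σ : Matrix ι ι ℂ) : ℝ :=
  ((ρ * mlog2 ρ).trace - (ρ * mlog2 σ).trace).re

/-- The bound `b` of Theorem 2 of the paper, for `N = n + 2` measurements (indexed `0,…,n+1`):
`b = max_{i_N} { ∑_{i_2,…,i_{N-1}} max_{i_1}[c(u^1_{i_1},u^2_{i_2})]
  ∏_{m=2}^{N-1} c(u^m_{i_m},u^{m+1}_{i_{m+1}}) }`.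
Here `g : Fin n → Fin d` lists the middle indices `(i_2,…,i_{N-1})`, `jN = i_N`, and
`Fin.snoc g jN : Fin (n+1) → Fin d` is the chain `(i_2,…,i_N)`. -/
def bBound {d n : ℕ} (u : Fin (n + 2) → Fin d → Fin d → ℂ) : ℝ :=
  ⨆ jN : Fin d, ∑ g : Fin n → Fin d,
    (⨆ i1 : Fin d, ov (u 0 i1) (u 1 ((Fin.snoc g jN : Fin (n + 1) → Fin d) 0))) *
      ∏ k : Fin n, ov (u k.succ.castSucc ((Fin.snoc g jN : Fin (n + 1) → Fin d) k.castSucc))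
        (u k.succ.succ ((Fin.snoc g jN : Fin (n + 1) → Fin d) k.succ))

/-- Partial trace over system `A`: `(Tr_A X)_{j j'} = ∑_i X_{(i,j),(i,j')}`. -/
def trA {d dB : ℕ} (X : Matrix (Fin d × Fin dB) (Fin d × Fin dB) ℂ) :
    Matrix (Fin dB) (Fin dB) ℂ :=
  Matrix.of fun j j' => ∑ i, X (i, j) (i, j')

/-- The operator `|a⟩⟨a| ⊗ I` acting on `ℂ^d ⊗ ℂ^{dB}`. -/
def projA {d : ℕ} (dB : ℕ) (a : Fin d → ℂ) : Matrix (Fin d × Fin dB) (Fin d × Fin dB) ℂ :=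
  Matrix.kroneckerMap (· * ·) (Matrix.vecMulVec a (star a)) (1 : Matrix (Fin dB) (Fin dB) ℂ)

end

-- auxiliary lemmas
section AuxForS12
lemma ov_nonneg' {d : ℕ} (a b : Fin d → ℂ) : 0 ≤ ov a b := sq_nonneg _

lemma col_orth {d : ℕ} {u : Fin d → Fin d → ℂ} (hu : IsONB u) (k l : Fin d) :
    ∑ i, u i k * (starRingEnd ℂ) (u i l) = if k = l then 1 else 0 := by
  have hA : (Matrix.of u) * (Matrix.of u).conjTranspose = 1 := by
    ext i j
    have := hu i j
    simp only [inn] at this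
    have : (starRingEnd ℂ) (∑ k, (starRingEnd ℂ) (u i k) * u j k)
        = (starRingEnd ℂ) (if i = j then 1 else 0) := by rw [this]
    simpa [Matrix.mul_apply, Matrix.conjTranspose_apply, map_sum, mul_comm,
      apply_ite (starRingEnd ℂ), Matrix.one_apply] using this
  have hB : (Matrix.of u).conjTranspose * (Matrix.of u) = 1 := mul_eq_one_comm.mp hA
  have := congrFun (congrFun hB k) l
  have h2 : (starRingEnd ℂ) (∑ i, (starRingEnd ℂ) (u i k) * u i l)
      = (starRingEnd ℂ) ((1 : Matrix (Fin d) (Fin d) ℂ) k l) := by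
    rw [← this]; simp [Matrix.mul_apply, Matrix.conjTranspose_apply]
  simpa [map_sum, mul_comm, Matrix.one_apply, apply_ite (starRingEnd ℂ), eq_comm] using h2

lemma sum_ov_eq_one {d : ℕ} {u : Fin d → Fin d → ℂ} (hu : IsONB u) {v : Fin d → ℂ}
    (hv : inn v v = 1) : ∑ i, ov (u i) v = 1 := by
  have key : ∑ i, ((starRingEnd ℂ) (inn (u i) v)) * inn (u i) v = 1 := by
    have expand : ∀ i, ((starRingEnd ℂ) (inn (u i) v)) * inn (u i) v
        = ∑ k, ∑ l, ((starRingEnd ℂ) (v k)) * v l * (u i k * (starRingEnd ℂ) (u i l)) := by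
      intro i
      simp only [inn, map_sum, map_mul, RingHomCompTriple.comp_apply, RingHom.id_apply, Complex.conj_conj,
        Finset.sum_mul_sum]
      refine Finset.sum_congr rfl fun k _ => Finset.sum_congr rfl fun l _ => by ring
    rw [Finset.sum_congr rfl fun i _ => expand i, Finset.sum_comm]
    have : ∀ k, ∑ i, ∑ l, ((starRingEnd ℂ) (v k)) * v l * (u i k * (starRingEnd ℂ) (u i l))
        = (starRingEnd ℂ) (v k) * v k := by
      intro k
      rw [Finset.sum_comm]
      have : ∀ l, ∑ i, ((starRingEnd ℂ) (v k)) * v l * (u i k * (starRingEnd ℂ) (u i l))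
          = ((starRingEnd ℂ) (v k)) * v l * (if k = l then 1 else 0) := by
        intro l
        rw [← Finset.mul_sum, col_orth hu]
      simp [this, Finset.sum_ite_eq, mul_ite]
    simp only [this]
    simpa [inn] using hv
  have : ∀ i, ov (u i) v = (((starRingEnd ℂ) (inn (u i) v)) * inn (u i) v).re := by
    intro i
    rw [ov, Complex.sq_norm, ← Complex.normSq_eq_conj_mul_self]
    simp
  rw [Finset.sum_congr rfl fun i _ => this i, ← Complex.re_sum, key]
  simp

lemma chain_sum_eq_one {d : ℕ} : ∀ (n : ℕ) (c : Fin n → Fin d → Fin d → ℝ)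
    (_hc : ∀ k j, ∑ i, c k i j = 1) (jN : Fin d),
    ∑ g : Fin n → Fin d, ∏ k : Fin n,
      c k ((Fin.snoc g jN : Fin (n+1) → Fin d) k.castSucc)
          ((Fin.snoc g jN : Fin (n+1) → Fin d) k.succ) = 1 := by
  intro n
  induction n with
  | zero => intro c hc jN; simp
  | succ n ih =>
    intro c hc jN
    rw [← (Fin.consEquiv (fun _ : Fin (n+1) => Fin d)).sum_comp
      (fun g => ∏ k : Fin (n+1),
        c k ((Fin.snoc g jN : Fin (n+2) → Fin d) k.castSucc)
          ((Fin.snoc g jN : Fin (n+2) → Fin d) k.succ))]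
    rw [Fintype.sum_prod_type]
    have hterm : ∀ (a : Fin d) (g' : Fin n → Fin d),
        (∏ k : Fin (n+1),
          c k ((Fin.snoc (Fin.cons a g' : Fin (n+1) → Fin d) jN : Fin (n+2) → Fin d) k.castSucc)
            ((Fin.snoc (Fin.cons a g' : Fin (n+1) → Fin d) jN : Fin (n+2) → Fin d) k.succ))
        = c 0 a ((Fin.snoc g' jN : Fin (n+1) → Fin d) 0) *
          ∏ k : Fin n, (fun k => c (Fin.succ k)) k
            ((Fin.snoc g' jN : Fin (n+1) → Fin d) k.castSucc)
            ((Fin.snoc g' jN : Fin (n+1) → Fin d) k.succ) := by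
      intro a g'
      rw [← Fin.cons_snoc_eq_snoc_cons, Fin.prod_univ_succ]
      refine congrArg₂ _ (by simp) ?_
      refine Finset.prod_congr rfl fun k _ => ?_
      rw [← Fin.succ_castSucc, Fin.cons_succ, Fin.cons_succ]
    refine .trans (Finset.sum_congr rfl fun a _ => Finset.sum_congr rfl fun g' _ => hterm a g') ?_
    rw [Finset.sum_comm]
    have : ∀ g' : Fin n → Fin d,
        ∑ a : Fin d, c 0 a ((Fin.snoc g' jN : Fin (n+1) → Fin d) 0) *
          ∏ k : Fin n, (fun k => c (Fin.succ k)) k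
            ((Fin.snoc g' jN : Fin (n+1) → Fin d) k.castSucc)
            ((Fin.snoc g' jN : Fin (n+1) → Fin d) k.succ)
        = ∏ k : Fin n, (fun k => c (Fin.succ k)) k
            ((Fin.snoc g' jN : Fin (n+1) → Fin d) k.castSucc)
            ((Fin.snoc g' jN : Fin (n+1) → Fin d) k.succ) := by
      intro g'
      rw [← Finset.sum_mul, hc 0 _, one_mul]
    rw [Finset.sum_congr rfl fun g' _ => this g']
    exact ih (fun k => c (Fin.succ k)) (fun k j => hc k.succ j) jN

end AuxForS12

/-- `b ≤ max_{i_1,i_2} c(u^1_{i_1},u^2_{i_2})`, so the multi-measurement bound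
`-log₂ b` is never weaker than the two-measurement Maassen–Uffink bound for `M_1, M_2`. -/
theorem bBound_le_MU {d n : ℕ} (hd : 0 < d) (u : Fin (n + 2) → Fin d → Fin d → ℂ)
    (hu : ∀ m, IsONB (u m)) :
    bBound u ≤ (⨆ i1 : Fin d, ⨆ i2 : Fin d, ov (u 0 i1) (u 1 i2)) ∧
      -Real.logb 2 (bBound u) ≥
        -Real.logb 2 (⨆ i1 : Fin d, ⨆ i2 : Fin d, ov (u 0 i1) (u 1 i2)) := by
  haveI : Nonempty (Fin d) := Fin.pos_iff_nonempty.mp hd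
  set M : ℝ := ⨆ i1 : Fin d, ⨆ i2 : Fin d, ov (u 0 i1) (u 1 i2) with hM
  have hunit : ∀ m i, inn (u m i) (u m i) = 1 := fun m i => by simpa using hu m i i
  set c : Fin n → Fin d → Fin d → ℝ :=
    fun k i j => ov (u k.succ.castSucc i) (u k.succ.succ j) with hcdef
  have hc : ∀ k j, ∑ i, c k i j = 1 :=
    fun k j => sum_ov_eq_one (hu _) (hunit _ j)
  have hchain : ∀ jN : Fin d,
      ∑ g : Fin n → Fin d, ∏ k : Fin n,
        c k ((Fin.snoc g jN : Fin (n+1) → Fin d) k.castSucc)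
          ((Fin.snoc g jN : Fin (n+1) → Fin d) k.succ) = 1 :=
    chain_sum_eq_one n c hc
  have hprod_nonneg : ∀ (jN : Fin d) (g : Fin n → Fin d),
      0 ≤ ∏ k : Fin n, c k ((Fin.snoc g jN : Fin (n+1) → Fin d) k.castSucc)
        ((Fin.snoc g jN : Fin (n+1) → Fin d) k.succ) :=
    fun jN g => Finset.prod_nonneg fun k _ => ov_nonneg' _ _
  have hM0 : ∀ (i1 : Fin d) (x : Fin d), ov (u 0 i1) (u 1 x) ≤ M := by
    intro i1 x
    refine le_trans (le_ciSup (f := fun i2 => ov (u 0 i1) (u 1 i2)) (Set.finite_range _).bddAbove x) ?_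
    exact le_ciSup (f := fun i1 => ⨆ i2, ov (u 0 i1) (u 1 i2)) (Set.finite_range _).bddAbove i1
  have hsup_le : ∀ x : Fin d, (⨆ i1 : Fin d, ov (u 0 i1) (u 1 x)) ≤ M :=
    fun x => ciSup_le fun i1 => hM0 i1 x
  have hsup_ge : ∀ x : Fin d, 1/(d:ℝ) ≤ ⨆ i1 : Fin d, ov (u 0 i1) (u 1 x) := by
    intro x
    have h1 : (1:ℝ) = ∑ i1, ov (u 0 i1) (u 1 x) := (sum_ov_eq_one (hu 0) (hunit 1 x)).symm
    have h2 : ∑ i1, ov (u 0 i1) (u 1 x)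
        ≤ (Finset.univ : Finset (Fin d)).card • (⨆ i1 : Fin d, ov (u 0 i1) (u 1 x)) :=
      Finset.sum_le_card_nsmul _ _ _
        (fun i _ => le_ciSup (f := fun i1 => ov (u 0 i1) (u 1 x)) (Set.finite_range _).bddAbove i)
    rw [Finset.card_univ, Fintype.card_fin, nsmul_eq_mul] at h2
    rw [div_le_iff₀ (by exact_mod_cast hd)]
    nlinarith [h2, h1]
  have hub : bBound u ≤ M := by
    refine ciSup_le fun jN => ?_
    calc ∑ g : Fin n → Fin d,
          (⨆ i1 : Fin d, ov (u 0 i1) (u 1 ((Fin.snoc g jN : Fin (n + 1) → Fin d) 0))) *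
            ∏ k : Fin n, c k ((Fin.snoc g jN : Fin (n+1) → Fin d) k.castSucc)
              ((Fin.snoc g jN : Fin (n+1) → Fin d) k.succ)
        ≤ ∑ g : Fin n → Fin d, M *
            ∏ k : Fin n, c k ((Fin.snoc g jN : Fin (n+1) → Fin d) k.castSucc)
              ((Fin.snoc g jN : Fin (n+1) → Fin d) k.succ) :=
          Finset.sum_le_sum fun g _ =>
            mul_le_mul_of_nonneg_right (hsup_le _) (hprod_nonneg jN g)
      _ = M := by rw [← Finset.mul_sum, hchain jN, mul_one]
  have hlb : 1/(d:ℝ) ≤ bBound u := by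
    have j0 : Fin d := ⟨0, hd⟩
    refine le_trans ?_ (le_ciSup (f := fun jN : Fin d => ∑ g : Fin n → Fin d,
      (⨆ i1 : Fin d, ov (u 0 i1) (u 1 ((Fin.snoc g jN : Fin (n + 1) → Fin d) 0))) *
        ∏ k : Fin n, ov (u k.succ.castSucc ((Fin.snoc g jN : Fin (n + 1) → Fin d) k.castSucc))
          (u k.succ.succ ((Fin.snoc g jN : Fin (n + 1) → Fin d) k.succ)))
      (Set.finite_range _).bddAbove j0)
    calc (1:ℝ)/d = 1/(d:ℝ) * ∑ g : Fin n → Fin d,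
          ∏ k : Fin n, c k ((Fin.snoc g j0 : Fin (n+1) → Fin d) k.castSucc)
            ((Fin.snoc g j0 : Fin (n+1) → Fin d) k.succ) := by rw [hchain j0, mul_one]
      _ = ∑ g : Fin n → Fin d, 1/(d:ℝ) *
          ∏ k : Fin n, c k ((Fin.snoc g j0 : Fin (n+1) → Fin d) k.castSucc)
            ((Fin.snoc g j0 : Fin (n+1) → Fin d) k.succ) := Finset.mul_sum _ _ _
      _ ≤ ∑ g : Fin n → Fin d,
          (⨆ i1 : Fin d, ov (u 0 i1) (u 1 ((Fin.snoc g j0 : Fin (n + 1) → Fin d) 0))) *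
            ∏ k : Fin n, c k ((Fin.snoc g j0 : Fin (n+1) → Fin d) k.castSucc)
              ((Fin.snoc g j0 : Fin (n+1) → Fin d) k.succ) :=
          Finset.sum_le_sum fun g _ =>
            mul_le_mul_of_nonneg_right (hsup_ge _) (hprod_nonneg j0 g)
  have hbpos : 0 < bBound u := lt_of_lt_of_le (by positivity) hlb
  refine ⟨hub, ?_⟩
  exact neg_le_neg (Real.logb_le_logb_of_le one_lt_two hbpos hub)
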